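/- Let ρ₊, n₊, u₊, u₋, μ, A₁, A₂ > 0 and γ, α ≥ 1. Let ũ, ṽ : [0,∞) → ℝ be twice continuously differentiable, positive, with ũ(0) = ṽ(0) = u₋, ũ(x) → u₊, ṽ(x) → u₊, ũ_x(x) → 0, ṽ_x(x) → 0 as x → ∞, satisfying on (0,∞) the reduced stationary system (ρ₊u₊ũ + A₁ρ₊^γu₊^γ ũ^{−γ})_x = (μ ũ_x)_x + (n₊u₊/ṽ)(ṽ − ũ) and (n₊u₊ṽ + A₂n₊^αu₊^α ṽ^{−α})_x = (n₊u₊ ṽ_x/ṽ)_x − (n₊u₊/ṽ)(ṽ − ũ). Then the exact boundary flux identity holds: μ ũ_x(0) + (n₊u₊/u₋) ṽ_x(0) = ρ₊u₊(u₋ − u₊) + A₁ρ₊^γu₊^γ(u₋^{−γ} − u₊^{−γ}) + n₊u₊(u₋ − u₊) + A₂n₊^αu₊^α(u₋^{−α} − u₊^{−α}). -/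

import Mathlib

open Filter Topology

/-- exact boundary flux identity for the reduced stationary system. -/
theorem stmt1 (ρp np up um μ A1 A2 γ α : ℝ)
    (hρp : 0 < ρp) (hnp : 0 < np) (hup : 0 < up) (hum : 0 < um)
    (hμ : 0 < μ) (hA1 : 0 < A1) (hA2 : 0 < A2) (hγ : 1 ≤ γ) (hα : 1 ≤ α)
    (ut vt : ℝ → ℝ) (huC2 : ContDiff ℝ 2 ut) (hvC2 : ContDiff ℝ 2 vt)
    (hupos : ∀ x ≥ (0:ℝ), 0 < ut x) (hvpos : ∀ x ≥ (0:ℝ), 0 < vt x)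
    (hbu : ut 0 = um) (hbv : vt 0 = um)
    (hlu : Tendsto ut atTop (nhds up)) (hlv : Tendsto vt atTop (nhds up))
    (hlu' : Tendsto (deriv ut) atTop (nhds 0)) (hlv' : Tendsto (deriv vt) atTop (nhds 0))
    (heq1 : ∀ x > (0:ℝ),
      deriv (fun y => ρp * up * ut y + A1 * ρp ^ γ * up ^ γ * (ut y) ^ (-γ)) x
        = deriv (fun y => μ * deriv ut y) x + (np * up / vt x) * (vt x - ut x))
    (heq2 : ∀ x > (0:ℝ),
      deriv (fun y => np * up * vt y + A2 * np ^ α * up ^ α * (vt y) ^ (-α)) x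
        = deriv (fun y => np * up * deriv vt y / vt y) x - (np * up / vt x) * (vt x - ut x)) :
    μ * deriv ut 0 + (np * up / um) * deriv vt 0
      = ρp * up * (um - up) + A1 * ρp ^ γ * up ^ γ * (um ^ (-γ) - up ^ (-γ))
        + np * up * (um - up) + A2 * np ^ α * up ^ α * (um ^ (-α) - up ^ (-α)) := by
  -- basic regularity
  have hu1 : Differentiable ℝ ut := huC2.differentiable two_ne_zero
  have hv1 : Differentiable ℝ vt := hvC2.differentiable two_ne_zero
  have huC2' : ContDiff ℝ ((1:ℕ)+1) ut := by exact_mod_cast huC2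
  have hvC2' : ContDiff ℝ ((1:ℕ)+1) vt := by exact_mod_cast hvC2
  have hu' : Differentiable ℝ (deriv ut) :=
    ((contDiff_succ_iff_deriv.mp huC2').2.2).differentiable (by simp)
  have hv' : Differentiable ℝ (deriv vt) :=
    ((contDiff_succ_iff_deriv.mp hvC2').2.2).differentiable (by simp)
  set f1 : ℝ → ℝ := fun y => ρp * up * ut y + A1 * ρp ^ γ * up ^ γ * (ut y) ^ (-γ) with hf1def
  set f2 : ℝ → ℝ := fun y => np * up * vt y + A2 * np ^ α * up ^ α * (vt y) ^ (-α) with hf2def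
  set g1 : ℝ → ℝ := fun y => μ * deriv ut y with hg1def
  set g2 : ℝ → ℝ := fun y => np * up * deriv vt y / vt y with hg2def
  set F : ℝ → ℝ := fun y => f1 y + f2 y - g1 y - g2 y with hFdef
  -- differentiability of F on [0, ∞)
  have hdiffF : ∀ x ≥ (0:ℝ), DifferentiableAt ℝ F x := by
    intro x hx
    have hux := (hupos x hx).ne'
    have hvx := (hvpos x hx).ne'
    have d1 : DifferentiableAt ℝ f1 x :=
      ((hu1 x).const_mul _).add (((hu1 x).rpow_const (Or.inl hux)).const_mul _)
    have d2 : DifferentiableAt ℝ f2 x :=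
      ((hv1 x).const_mul _).add (((hv1 x).rpow_const (Or.inl hvx)).const_mul _)
    have d3 : DifferentiableAt ℝ g1 x := (hu' x).const_mul μ
    have d4 : DifferentiableAt ℝ g2 x := ((hv' x).const_mul _).div (hv1 x) hvx
    exact ((d1.add d2).sub d3).sub d4
  -- F has zero derivative on (0, ∞)
  have hderivF : ∀ x > (0:ℝ), HasDerivAt F 0 x := by
    intro x hx
    have hx' : (0:ℝ) ≤ x := le_of_lt hx
    have hux := (hupos x hx').ne'
    have hvx := (hvpos x hx').ne'
    have d1 : DifferentiableAt ℝ f1 x :=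
      ((hu1 x).const_mul _).add (((hu1 x).rpow_const (Or.inl hux)).const_mul _)
    have d2 : DifferentiableAt ℝ f2 x :=
      ((hv1 x).const_mul _).add (((hv1 x).rpow_const (Or.inl hvx)).const_mul _)
    have d3 : DifferentiableAt ℝ g1 x := (hu' x).const_mul μ
    have d4 : DifferentiableAt ℝ g2 x := ((hv' x).const_mul _).div (hv1 x) hvx
    have hD : HasDerivAt F (deriv f1 x + deriv f2 x - deriv g1 x - deriv g2 x) x :=
      ((d1.hasDerivAt.add d2.hasDerivAt).sub d3.hasDerivAt).sub d4.hasDerivAt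
    have hval : deriv f1 x + deriv f2 x - deriv g1 x - deriv g2 x = 0 := by
      rw [hf1def, hf2def, heq1 x hx, heq2 x hx, hg1def, hg2def]; ring
    rwa [hval] at hD
  -- F is constant on (0, ∞)
  set L : ℝ := (ρp * up * up + A1 * ρp ^ γ * up ^ γ * up ^ (-γ))
      + (np * up * up + A2 * np ^ α * up ^ α * up ^ (-α)) with hLdef
  have hlimF : Tendsto F atTop (𝓝 L) := by
    have t2 : Tendsto (fun y => (ut y) ^ (-γ)) atTop (𝓝 (up ^ (-γ))) :=
      (Real.continuousAt_rpow_const up (-γ) (Or.inl hup.ne')).tendsto.comp hlu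
    have t4 : Tendsto (fun y => (vt y) ^ (-α)) atTop (𝓝 (up ^ (-α))) :=
      (Real.continuousAt_rpow_const up (-α) (Or.inl hup.ne')).tendsto.comp hlv
    have tf1 : Tendsto f1 atTop (𝓝 (ρp * up * up + A1 * ρp ^ γ * up ^ γ * up ^ (-γ))) :=
      (hlu.const_mul _).add (t2.const_mul _)
    have tf2 : Tendsto f2 atTop (𝓝 (np * up * up + A2 * np ^ α * up ^ α * up ^ (-α))) :=
      (hlv.const_mul _).add (t4.const_mul _)
    have tg1 : Tendsto g1 atTop (𝓝 (μ * 0)) := hlu'.const_mul μ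
    have tg2 : Tendsto g2 atTop (𝓝 (np * up * 0 / up)) := (hlv'.const_mul _).div hlv hup.ne'
    have := ((tf1.add tf2).sub tg1).sub tg2
    simpa [hLdef] using this
  have hconst : ∀ x > (0:ℝ), F x = L := by
    intro x hx
    -- F is constant on [x, ∞)
    have hstep : ∀ y ≥ x, F y = F x := by
      intro y hy
      have hcont : ContinuousOn F (Set.Icc x y) := fun z hz =>
        ((hdiffF z (le_trans hx.le hz.1)).continuousAt).continuousWithinAt
      have hder : ∀ z ∈ Set.Ico x y, HasDerivWithinAt F 0 (Set.Ici z) z := fun z hz =>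
        (hderivF z (lt_of_lt_of_le hx hz.1)).hasDerivWithinAt
      exact constant_of_has_deriv_right_zero hcont hder y ⟨hy, le_rfl⟩
    have : Tendsto F atTop (𝓝 (F x)) :=
      tendsto_const_nhds.congr' ((eventually_ge_atTop x).mono fun y hy => (hstep y hy).symm)
    exact tendsto_nhds_unique this hlimF
  -- conclude F 0 = L by continuity from the right
  have hF0 : F 0 = L := by
    have h1 : Tendsto F (𝓝[>] (0:ℝ)) (𝓝 (F 0)) :=
      ((hdiffF 0 le_rfl).continuousAt).tendsto.mono_left nhdsWithin_le_nhds
    have h2 : Tendsto F (𝓝[>] (0:ℝ)) (𝓝 L) :=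
      tendsto_const_nhds.congr'
        (eventually_nhdsWithin_of_forall fun y hy => (hconst y hy).symm)
    exact tendsto_nhds_unique h1 h2
  -- unfold and rearrange
  have hexp : ρp * up * um + A1 * ρp ^ γ * up ^ γ * um ^ (-γ)
      + (np * up * um + A2 * np ^ α * up ^ α * um ^ (-α))
      - μ * deriv ut 0 - np * up * deriv vt 0 / um = L := by
    have := hF0
    simp only [hFdef, hf1def, hf2def, hg1def, hg2def, hbu, hbv] at this
    linarith [this]
  have hdiv : (np * up / um) * deriv vt 0 = np * up * deriv vt 0 / um := by ring
  rw [hLdef] at hexp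
  linarith [hexp, hdiv]
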